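/- A partition π of [n+m] into blocks of size at least 2, with n+m = t, corresponds to a rooted phylogenetic tree on n leaves if and only if ℓ(π) = m + 1; consequently, for a given partition π of [t] into blocks of size ≥ 2, the values n and m with n + m = t for which π gives a tree are uniquely determined: m = ℓ(π) - 1 and n = t - ℓ(π) + 1. -/

import Mathlib

/-- A rooted phylogenetic tree with `n` labelled leaves and `m` (unlabelled)
non-root internal vertices.  Every leaf and every internal vertex has a parent,
which is either an internal vertex or the root; the parent relation is acyclic,
and every non-leaf vertex (internal vertex or root) has at least two children. -/
structure PhyloTree (n m : ℕ) where
  parent : Fin n ⊕ Fin m → Fin m ⊕ Unit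
  acyclic : ∃ d : Fin m → ℕ, ∀ j k : Fin m, parent (Sum.inr j) = Sum.inl k → d k < d j
  outdeg : ∀ v : Fin m ⊕ Unit,
    2 ≤ (Finset.univ.filter (fun u : Fin n ⊕ Fin m => parent u = v)).card

/-- Diaconis–Holmes style numbering of the non-root vertices: leaf `i` gets
number `i`, internal vertex `j` gets number `n + j`. -/
def vnum (n m : ℕ) : Fin n ⊕ Fin m → Fin (n + m) :=
  Sum.elim (Fin.castAdd m) (Fin.natAdd n)

/-- A partition `π` of `[n+m]` corresponds to the tree `T` if its blocks are
exactly the sets of (numbers of) sibling vertices of `T`. -/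
def correspondsTo {n m : ℕ} (π : Finpartition (Finset.univ : Finset (Fin (n + m))))
    (T : PhyloTree n m) : Prop :=
  ∀ b : Finset (Fin (n + m)), b ∈ π.parts ↔
    ∃ v : Fin m ⊕ Unit,
      b = (Finset.univ.filter (fun u : Fin n ⊕ Fin m => T.parent u = v)).image (vnum n m)

lemma vnum_eq (n m : ℕ) : vnum n m = ⇑(finSumFinEquiv (m := n) (n := m)) := rfl

lemma vnum_inj (n m : ℕ) : Function.Injective (vnum n m) := by
  rw [vnum_eq]; exact finSumFinEquiv.injective

lemma vnum_surj (n m : ℕ) : Function.Surjective (vnum n m) := by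
  rw [vnum_eq]; exact finSumFinEquiv.surjective

section Construct

variable (n m : ℕ) (π : Finpartition (Finset.univ : Finset (Fin (n + m))))

/-- key of a block: its maximal element, as a natural number. -/
noncomputable def bkey (b : Finset (Fin (n + m))) : ℕ := b.sup Fin.val

lemma bkey_injOn : Set.InjOn (bkey n m) π.parts := by
  intro b hb b' hb' h
  obtain ⟨x, hx, hxe⟩ := Finset.exists_mem_eq_sup b (π.nonempty_of_mem_parts hb) Fin.val
  obtain ⟨x', hx', hxe'⟩ := Finset.exists_mem_eq_sup b' (π.nonempty_of_mem_parts hb') Fin.val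
  have : x = x' := Fin.val_injective (by rw [← hxe, ← hxe']; exact h)
  exact π.eq_of_mem_parts hb hb' hx (this ▸ hx')

lemma exists_tree (hblocks : ∀ b ∈ π.parts, 2 ≤ b.card)
    (hc : π.parts.card = m + 1) : ∃ T : PhyloTree n m, correspondsTo π T := by
  classical
  set S : Finset ℕ := π.parts.image (bkey n m) with hSdef
  have hS : S.card = m + 1 := by
    rw [hSdef, Finset.card_image_of_injOn (bkey_injOn n m π), hc]
  set σ : Fin (m + 1) ≃o {x // x ∈ S} := S.orderIsoOfFin hS with hσ
  have hexu : ∀ i : Fin (m + 1), ∃! b, b ∈ π.parts ∧ bkey n m b = (σ i : ℕ) := by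
    intro i
    obtain ⟨b, hb, hbe⟩ := Finset.mem_image.mp (σ i).2
    refine ⟨b, ⟨hb, hbe⟩, ?_⟩
    rintro b' ⟨hb', hbe'⟩
    exact bkey_injOn n m π hb' hb (by rw [hbe, hbe'])
  set blk : Fin (m + 1) → Finset (Fin (n + m)) :=
    fun i => π.parts.choose _ (hexu i) with hblk
  have blk_mem : ∀ i, blk i ∈ π.parts := fun i => Finset.choose_mem _ _ _
  have key_blk : ∀ i, bkey n m (blk i) = (σ i : ℕ) :=
    fun i => Finset.choose_property (fun b => bkey n m b = (σ i : ℕ)) π.parts (hexu i)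
  have blk_uniq : ∀ i b, b ∈ π.parts → bkey n m b = (σ i : ℕ) → blk i = b := by
    intro i b hb he
    exact bkey_injOn n m π (blk_mem i) hb (by rw [key_blk, he])
  -- index of the part containing a vertex
  have memS : ∀ u : Fin n ⊕ Fin m, bkey n m (π.part (vnum n m u)) ∈ S :=
    fun u => Finset.mem_image_of_mem _ (π.part_mem.mpr (Finset.mem_univ _))
  set pidx : Fin n ⊕ Fin m → Fin (m + 1) :=
    fun u => σ.symm ⟨bkey n m (π.part (vnum n m u)), memS u⟩ with hpidx
  have blk_pidx : ∀ u, blk (pidx u) = π.part (vnum n m u) := by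
    intro u
    refine blk_uniq _ _ (π.part_mem.mpr (Finset.mem_univ _)) ?_
    exact congrArg Subtype.val
      (σ.apply_symm_apply ⟨bkey n m (π.part (vnum n m u)), memS u⟩).symm
  have pidx_iff : ∀ u i, pidx u = i ↔ vnum n m u ∈ blk i := by
    intro u i
    constructor
    · rintro rfl
      rw [blk_pidx]
      exact π.mem_part (Finset.mem_univ _)
    · intro h
      have hpe : π.part (vnum n m u) = blk i := π.part_eq_of_mem (blk_mem i) h
      have hsub : (⟨bkey n m (π.part (vnum n m u)), memS u⟩ : {x // x ∈ S}) = σ i :=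
        Subtype.ext (show bkey n m (π.part (vnum n m u)) = (σ i : ℕ) by rw [hpe, key_blk])
      exact (congrArg σ.symm hsub).trans (σ.symm_apply_apply i)
  -- counting lemma
  have count : ∀ (j : Fin m) (i : Fin (m + 1)), vnum n m (Sum.inr j) ∈ blk i → (j : ℕ) < i := by
    intro j i hmem
    have hval : (vnum n m (Sum.inr j) : ℕ) = n + j := rfl
    have hF : ∀ i' ∈ Finset.Ici i, (σ i' : ℕ) ∈ Finset.Ico (n + (j : ℕ)) (n + m) := by
      intro i' hi'
      rw [Finset.mem_Ici] at hi'
      have h1 : n + (j : ℕ) ≤ (σ i : ℕ) := by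
        rw [← key_blk]
        exact hval ▸ Finset.le_sup hmem
      have h2 : (σ i : ℕ) ≤ (σ i' : ℕ) := σ.monotone hi'
      have h3 : (σ i' : ℕ) < n + m := by
        rw [← key_blk]
        obtain ⟨x, hx, hxe⟩ := Finset.exists_mem_eq_sup (blk i')
          (π.nonempty_of_mem_parts (blk_mem i')) Fin.val
        rw [bkey, hxe]
        exact x.isLt
      exact Finset.mem_Ico.mpr ⟨le_trans h1 h2, h3⟩
    have hinj : Set.InjOn (fun i' => (σ i' : ℕ)) (Finset.Ici i) := by
      intro a _ b _ hab
      exact σ.injective (Subtype.ext hab)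
    have hcard := Finset.card_le_card_of_injOn _ hF hinj
    rw [Fin.card_Ici, Nat.card_Ico] at hcard
    have := i.isLt
    have := j.isLt
    omega
  set par : Fin n ⊕ Fin m → Fin m ⊕ Unit :=
    fun u => if h : (pidx u : ℕ) < m then Sum.inl ⟨pidx u, h⟩ else Sum.inr () with hpar
  set f : Fin m ⊕ Unit → Fin (m + 1) := Sum.elim Fin.castSucc (fun _ => Fin.last m) with hf
  have par_iff : ∀ u v, par u = v ↔ pidx u = f v := by
    intro u v
    rw [hpar]
    simp only
    by_cases h : (pidx u : ℕ) < m
    · rw [dif_pos h]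
      cases v with
      | inl k =>
        simp only [hf, Sum.elim_inl, Sum.inl.injEq]
        constructor
        · rintro rfl; exact Fin.ext rfl
        · intro he
          exact Fin.ext (by simpa using congrArg Fin.val he)
      | inr _ =>
        simp only [hf, Sum.elim_inr]
        constructor
        · intro he; exact absurd he (by simp)
        · intro he
          have hv : (pidx u : ℕ) = m := by
            have := congrArg Fin.val he
            simpa using this
          omega
    · rw [dif_neg h]
      have hum : (pidx u : ℕ) = m := by have := (pidx u).isLt; omega
      cases v with
      | inl k =>
        simp only [hf, Sum.elim_inl]
        constructor
        · intro he; exact absurd he (by simp)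
        · intro he
          have h1 : (pidx u : ℕ) = (k : ℕ) := congrArg Fin.val he
          have := k.isLt
          omega
      | inr v =>
        simp only [hf, Sum.elim_inr]
        constructor
        · intro _; exact Fin.ext (by rw [hum]; rfl)
        · intro _; trivial
  have children : ∀ v, (Finset.univ.filter (fun u => par u = v)).image (vnum n m) = blk (f v) := by
    intro v
    ext x
    simp only [Finset.mem_image, Finset.mem_filter, Finset.mem_univ, true_and]
    constructor
    · rintro ⟨u, hu, rfl⟩
      exact (pidx_iff u (f v)).mp ((par_iff u v).mp hu)
    · intro hx
      obtain ⟨u, rfl⟩ := vnum_surj n m x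
      exact ⟨u, (par_iff u v).mpr ((pidx_iff u (f v)).mpr hx), rfl⟩
  have f_surj : ∀ i : Fin (m + 1), ∃ v, f v = i := by
    intro i
    by_cases h : (i : ℕ) < m
    · exact ⟨Sum.inl ⟨i, h⟩, Fin.ext rfl⟩
    · refine ⟨Sum.inr (), Fin.ext ?_⟩
      have := i.isLt
      simp only [hf, Sum.elim_inr, Fin.val_last]
      omega
  refine ⟨⟨par, ?_, ?_⟩, ?_⟩
  · refine ⟨fun j => m - (j : ℕ), ?_⟩
    intro j k hjk
    have hp := (par_iff (Sum.inr j) (Sum.inl k)).mp hjk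
    have hm := (pidx_iff (Sum.inr j) (f (Sum.inl k))).mp hp
    have hcount := count j _ hm
    have hkk : ((f (Sum.inl k)) : ℕ) = (k : ℕ) := rfl
    rw [hkk] at hcount
    have := k.isLt
    have := j.isLt
    show m - (k : ℕ) < m - (j : ℕ)
    omega
  · intro v
    have hcard : ((Finset.univ.filter (fun u => par u = v)).image (vnum n m)).card
        = (Finset.univ.filter (fun u => par u = v)).card :=
      Finset.card_image_of_injective _ (vnum_inj n m)
    rw [← hcard, children]
    exact hblocks _ (blk_mem _)
  · intro b
    constructor
    · intro hb
      obtain ⟨i, hi⟩ := σ.surjective ⟨bkey n m b, Finset.mem_image_of_mem (bkey n m) hb⟩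
      obtain ⟨v, hv⟩ := f_surj i
      refine ⟨v, ?_⟩
      rw [children, hv]
      exact (blk_uniq i b hb (by rw [hi])).symm
    · rintro ⟨v, rfl⟩
      rw [children]
      exact blk_mem _

end Construct

/-- A partition `π` of `[n+m]` into blocks of size at least 2 corresponds to a
rooted phylogenetic tree on `n` leaves and `m` non-root internal vertices if
and only if `ℓ(π) = m + 1`; consequently `m` and `n` are uniquely determined by
`π`: `m = ℓ(π) - 1` and `n = (n + m) - ℓ(π) + 1`. -/
theorem tree_partition_iff (n m : ℕ)
    (π : Finpartition (Finset.univ : Finset (Fin (n + m))))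
    (hblocks : ∀ b ∈ π.parts, 2 ≤ b.card) :
    (∃ T : PhyloTree n m, correspondsTo π T) ↔
      (m = π.parts.card - 1 ∧ n = (n + m) - π.parts.card + 1) := by
  classical
  have hsum : 2 * π.parts.card ≤ n + m := by
    have h1 : ∑ b ∈ π.parts, 2 ≤ ∑ b ∈ π.parts, b.card := Finset.sum_le_sum hblocks
    have h2 : ∑ b ∈ π.parts, b.card = n + m := by
      rw [π.sum_card_parts, Finset.card_univ, Fintype.card_fin]
    rw [Finset.sum_const, smul_eq_mul] at h1
    omega
  constructor
  · rintro ⟨T, hT⟩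
    have hcard : π.parts.card = m + 1 := by
      have hparts : π.parts =
          Finset.univ.image (fun v : Fin m ⊕ Unit =>
            (Finset.univ.filter (fun u => T.parent u = v)).image (vnum n m)) := by
        ext b
        rw [hT b, Finset.mem_image]
        constructor
        · rintro ⟨v, rfl⟩; exact ⟨v, Finset.mem_univ _, rfl⟩
        · rintro ⟨v, _, rfl⟩; exact ⟨v, rfl⟩
      have hinj : Function.Injective (fun v : Fin m ⊕ Unit =>
          (Finset.univ.filter (fun u => T.parent u = v)).image (vnum n m)) := by
        intro v v' h
        dsimp only at h
        have hne : (Finset.univ.filter (fun u => T.parent u = v)).Nonempty := by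
          rw [← Finset.card_pos]
          have := T.outdeg v
          omega
        obtain ⟨u, hu⟩ := hne
        have hmem : vnum n m u ∈ (Finset.univ.filter (fun u => T.parent u = v')).image (vnum n m) := by
          rw [← h]
          exact Finset.mem_image_of_mem _ hu
        obtain ⟨u', hu', hue⟩ := Finset.mem_image.mp hmem
        rw [Finset.mem_filter] at hu hu'
        rw [← hu.2, ← hu'.2, vnum_inj n m hue]
      rw [hparts, Finset.card_image_of_injective _ hinj, Finset.card_univ,
        Fintype.card_sum, Fintype.card_fin, Fintype.card_unit]
    omega
  · rintro ⟨h1, h2⟩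
    have hc : π.parts.card = m + 1 := by
      rcases Nat.eq_zero_or_pos π.parts.card with h0 | hpos
      · exfalso
        have : π.parts = ∅ := Finset.card_eq_zero.mp h0
        have huniv : (Finset.univ : Finset (Fin (n + m))) = ⊥ := Finpartition.parts_eq_empty_iff.mp this
        have : n + m = 0 := by
          rw [← Fintype.card_fin (n + m), ← Finset.card_univ, huniv]
          rfl
        omega
      · omega
    exact exists_tree n m π hblocks hc
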